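/- Conversely, if DMU_k is a non-extreme DMU of E (i.e., X_k = Σ_{j∈E∖{k}} λ̄_j X_j and Y_k = Σ_{j∈E∖{k}} λ̄_j Y_j for some λ̄ ≥ 0, possibly after the cone rescaling 1/(1−λ̄_k) when λ̄_k < 1), then for every input index l the program min θ subject to Σ_{j∈E∖{k}} λ_j x_{lj} ≤ θ x_{lk}, Σ_{j∈E∖{k}} λ_j x_{ij} ≤ x_{ik} (i ≠ l), Σ_{j∈E∖{k}} λ_j y_{rj} ≥ y_{rk}, λ ≥ 0 is feasible with optimal value θ* ≤ 1. -/
import Mathlib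

/-- Feasibility of the super-efficiency model (5) for DMU `k`, input index `li`. -/
def Feas5 {n m s : ℕ} (X : Fin n → Fin m → ℝ) (Y : Fin n → Fin s → ℝ)
    (E : Finset (Fin n)) (k : Fin n) (li : Fin m) (θ : ℝ) (l : Fin n → ℝ) : Prop :=
  (∀ j, 0 ≤ l j) ∧
  (∑ j ∈ E.erase k, l j * X j li ≤ θ * X k li) ∧
  (∀ i, i ≠ li → ∑ j ∈ E.erase k, l j * X j i ≤ X k i) ∧
  (∀ r, Y k r ≤ ∑ j ∈ E.erase k, l j * Y j r)

/-- Property 1 (converse direction): if `DMU_k` is a non-extreme efficient DMU, i.e. a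
nonnegative combination of the other efficient DMUs, then for every input index `li`
the super-efficiency model (5) is feasible with optimal value `θ* ≤ 1`. -/
theorem nonextreme_implies_superefficiency_feasible_le_one
    {n m s : ℕ} (X : Fin n → Fin m → ℝ) (Y : Fin n → Fin s → ℝ)
    (hX : ∀ j i, 0 < X j i) (hY : ∀ j r, 0 < Y j r)
    (E : Finset (Fin n)) (k : Fin n) (hk : k ∈ E)
    (hnonextreme : ∃ lb : Fin n → ℝ, (∀ j, 0 ≤ lb j) ∧
      (∀ i, ∑ j ∈ E.erase k, lb j * X j i = X k i) ∧
      (∀ r, ∑ j ∈ E.erase k, lb j * Y j r = Y k r)) :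
    ∀ li : Fin m, ∃ (θ : ℝ) (l : Fin n → ℝ), θ ≤ 1 ∧ Feas5 X Y E k li θ l := by
  obtain ⟨lb, hpos, hXeq, hYeq⟩ := hnonextreme
  intro li
  refine ⟨1, lb, le_refl 1, hpos, ?_, ?_, ?_⟩
  · rw [hXeq li, one_mul]
  · intro i _; rw [hXeq i]
  · intro r; rw [hYeq r]
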